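/- Let (X, d) be a complete metric space valued in a partially ordered group G with analytic topological structure ≪, and let T be a multi-valued φ-weak contraction on X satisfying the C-condition. Then T has a unique endpoint if and only if T has the approximate endpoint property. -/

import Mathlib

/-- Endpoint theorem: a multi-valued φ-weak contraction on a complete metric space
valued in a partially ordered group, satisfying the C-condition, has a unique endpoint
iff it has the approximate endpoint property. -/
theorem stmt_17 {G : Type*} [AddCommGroup G] [PartialOrder G]
    (g1 : ∀ a b c : G, a < b → a + c < b + c)
    (ll : G → G → Prop)
    (hnonempty : ∃ x y, ll x y)
    (t1 : ∀ x y, ll x y → x < y)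
    (t2 : ∀ x y z, x ≤ y → ll y z → ll x z)
    (t3 : ∀ x y z, ll x y → ll (x + z) (y + z))
    (t4 : ∀ x, 0 ≤ x → (∀ ε, ll 0 ε → ll x ε) → x = 0)
    (t5 : ∀ ε, ll 0 ε → ∃ η, ll 0 η ∧ ll η ε)
    {X : Type*} (d : X → X → G)
    (d1 : ∀ x y, 0 ≤ d x y) (d1' : ∀ x y, d x y = 0 ↔ x = y)
    (d2 : ∀ x y, d x y = d y x)
    (d3 : ∀ x y z, d x y ≤ d x z + d z y)
    -- completeness: every Cauchy sequence converges
    (hcomplete : ∀ x : ℕ → X,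
      (∀ ε, ll 0 ε → ∃ N, ∀ n > N, ∀ m > N, ll (d (x n) (x m)) ε) →
      ∃ p : X, ∀ ε, ll 0 ε → ∃ N, ∀ n > N, ll (d (x n) p) ε)
    (T : X → Set X) (hT : ∀ x, (T x).Nonempty)
    (φ : X → X → G) (hφ0 : ∀ x y, 0 ≤ φ x y)
    (hφ : ∀ x y, 0 < d x y → φ x y < d x y)
    (hcontr : ∀ x y, x ≠ y → ∀ x' ∈ T x, ∃ y' ∈ T y, d x' y' ≤ φ x y)
    -- C-condition
    (hC : ∀ x y : ℕ → X,
      (∀ ε, ll 0 ε → ∃ N, ∀ n > N, 0 ≤ d (x n) (y n) - φ (x n) (y n) ∧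
        ll (d (x n) (y n) - φ (x n) (y n)) ε) →
      ∀ ε, ll 0 ε → ∃ N, ∀ n > N, ll (d (x n) (y n)) ε) :
    (∃! x : X, T x = {x}) ↔
    (∃ (xs : ℕ → X) (as : ℕ → G), (∀ n, 0 ≤ as n) ∧
      (∀ ε, ll 0 ε → ∃ N, ∀ n > N, 0 ≤ as n ∧ ll (as n) ε) ∧
      ∀ n, ∀ y ∈ T (xs n), d (xs n) y ≤ as n) := by
  haveI i1 : CovariantClass G G (· + ·) (· < ·) :=
    ⟨fun c a b h => by have := g1 a b c h; simpa [add_comm] using this⟩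
  haveI i2 : CovariantClass G G (Function.swap (· + ·)) (· < ·) :=
    ⟨fun c a b h => g1 a b c h⟩
  haveI i3 : CovariantClass G G (· + ·) (· ≤ ·) :=
    ⟨fun c a b h => by
      rcases lt_or_eq_of_le h with h | h
      · exact le_of_lt (by have := g1 a b c h; simpa [add_comm] using this)
      · rw [h]⟩
  haveI i4 : CovariantClass G G (Function.swap (· + ·)) (· ≤ ·) :=
    ⟨fun c a b h => by
      rcases lt_or_eq_of_le h with h | h
      · exact le_of_lt (g1 a b c h)
      · rw [h]⟩
  -- sum splitting lemma
  have sum2 : ∀ ε, ll 0 ε → ∃ η₁ η₂, ll 0 η₁ ∧ ll 0 η₂ ∧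
      ∀ a b, ll a η₁ → ll b η₂ → ll (a + b) ε := by
    intro ε hε
    obtain ⟨η, hη0, hηε⟩ := t5 ε hε
    refine ⟨η, ε - η, hη0, ?_, ?_⟩
    · have := t3 η ε (-η) hηε
      simpa [sub_eq_add_neg] using this
    · intro a b ha hb
      have h1 : ll (b + η) (ε - η + η) := t3 b (ε - η) η hb
      have h2 : ll (b + η) ε := by
        have : ε - η + η = ε := by abel
        rwa [this] at h1
      have h3 : a + b ≤ b + η := by
        have := le_of_lt (t1 a η ha)
        calc a + b ≤ η + b := add_le_add_left this b
          _ = b + η := add_comm _ _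
      exact t2 _ _ _ h3 h2
  have sum3 : ∀ ε, ll 0 ε → ∃ η₁ η₂ η₃, ll 0 η₁ ∧ ll 0 η₂ ∧ ll 0 η₃ ∧
      ∀ a b c, ll a η₁ → ll b η₂ → ll c η₃ → ll (a + b + c) ε := by
    intro ε hε
    obtain ⟨α, β, hα, hβ, hab⟩ := sum2 ε hε
    obtain ⟨η₁, η₂, h1, h2, h12⟩ := sum2 α hα
    exact ⟨η₁, η₂, β, h1, h2, hβ, fun a b c ha hb hc => hab (a + b) c (h12 a b ha hb) hc⟩
  constructor
  · rintro ⟨x, hx, -⟩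
    refine ⟨fun _ => x, fun _ => 0, fun _ => le_refl _, fun ε hε => ⟨0, fun n _ => ⟨le_refl _, hε⟩⟩, ?_⟩
    intro n y hy
    rw [hx] at hy
    rw [hy]
    exact le_of_eq ((d1' x x).mpr rfl)
  · rintro ⟨xs, as, has0, hasto, hbd⟩
    -- the sequence is Cauchy
    have hcauchy : ∀ ε, ll 0 ε → ∃ N, ∀ n > N, ∀ m > N, ll (d (xs n) (xs m)) ε := by
      by_contra hc
      push_neg at hc
      obtain ⟨ε₀, hε₀, h2⟩ := hc
      choose n hn m hm hd using h2
      have hne : ∀ k, xs (n k) ≠ xs (m k) := by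
        intro k hkeq
        apply hd k
        have : d (xs (n k)) (xs (m k)) = 0 := (d1' _ _).mpr hkeq
        rw [this]; exact hε₀
      have hpos : ∀ k, 0 < d (xs (n k)) (xs (m k)) := fun k =>
        lt_of_le_of_ne (d1 _ _) (fun h => hne k ((d1' _ _).mp h.symm))
      have hub : ∀ k, d (xs (n k)) (xs (m k)) - φ (xs (n k)) (xs (m k)) ≤ as (n k) + as (m k) := by
        intro k
        obtain ⟨x', hx'⟩ := hT (xs (n k))
        obtain ⟨y', hy', hdy⟩ := hcontr (xs (n k)) (xs (m k)) (hne k) x' hx'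
        have h1 : d (xs (n k)) (xs (m k)) ≤ as (n k) + φ (xs (n k)) (xs (m k)) + as (m k) := by
          calc d (xs (n k)) (xs (m k)) ≤ d (xs (n k)) x' + d x' (xs (m k)) := d3 _ _ _
            _ ≤ d (xs (n k)) x' + (d x' y' + d y' (xs (m k))) :=
                add_le_add_right (d3 _ _ _) _
            _ ≤ as (n k) + (φ (xs (n k)) (xs (m k)) + as (m k)) := by
                apply add_le_add (hbd (n k) x' hx')
                apply add_le_add hdy
                rw [d2]; exact hbd (m k) y' hy'
            _ = as (n k) + φ (xs (n k)) (xs (m k)) + as (m k) := by abel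
        have := sub_le_sub_right h1 (φ (xs (n k)) (xs (m k)))
        calc d (xs (n k)) (xs (m k)) - φ (xs (n k)) (xs (m k))
            ≤ as (n k) + φ (xs (n k)) (xs (m k)) + as (m k) - φ (xs (n k)) (xs (m k)) := this
          _ = as (n k) + as (m k) := by abel
      have hCh : ∀ ε, ll 0 ε → ∃ N, ∀ k > N,
          0 ≤ d (xs (n k)) (xs (m k)) - φ (xs (n k)) (xs (m k)) ∧
          ll (d (xs (n k)) (xs (m k)) - φ (xs (n k)) (xs (m k))) ε := by
        intro ε hε
        obtain ⟨η₁, η₂, hη₁, hη₂, hsum⟩ := sum2 ε hε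
        obtain ⟨N₁, hN₁⟩ := hasto η₁ hη₁
        obtain ⟨N₂, hN₂⟩ := hasto η₂ hη₂
        refine ⟨max N₁ N₂, fun k hk => ?_⟩
        have hk1 : n k > N₁ := lt_trans (lt_of_le_of_lt (le_max_left _ _) hk) (hn k)
        have hk2 : m k > N₂ := lt_trans (lt_of_le_of_lt (le_max_right _ _) hk) (hm k)
        constructor
        · exact le_of_lt (sub_pos.mpr (hφ _ _ (hpos k)))
        · exact t2 _ _ _ (hub k) (hsum _ _ (hN₁ (n k) hk1).2 (hN₂ (m k) hk2).2)
      obtain ⟨N, hN⟩ := hC (fun k => xs (n k)) (fun k => xs (m k)) hCh ε₀ hε₀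
      exact hd (N + 1) (hN (N + 1) (Nat.lt_succ_self N))
    obtain ⟨p, hp⟩ := hcomplete xs hcauchy
    -- every element of T p equals p
    have key : ∀ y ∈ T p, ∀ k, d p y ≤ d (xs k) p + d (xs k) p + as k := by
      intro y hy k
      rcases eq_or_ne (xs k) p with heq | hne
      · have hy' : y ∈ T (xs k) := heq ▸ hy
        have h1 : d (xs k) y ≤ as k := hbd k y hy'
        have h2 : d p y ≤ as k := by rw [← heq]; exact h1
        calc d p y ≤ as k := h2
          _ = 0 + 0 + as k := by abel
          _ ≤ d (xs k) p + d (xs k) p + as k :=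
            add_le_add_left (add_le_add (d1 _ _) (d1 _ _)) _
      · have hppos : 0 < d p (xs k) :=
          lt_of_le_of_ne (d1 _ _) (fun h => hne (((d1' _ _).mp h.symm).symm))
        obtain ⟨z, hz, hdz⟩ := hcontr p (xs k) (Ne.symm hne) y hy
        have hφle : φ p (xs k) ≤ d p (xs k) := le_of_lt (hφ _ _ hppos)
        calc d p y ≤ d p (xs k) + d (xs k) y := d3 _ _ _
          _ ≤ d p (xs k) + (d (xs k) z + d z y) := add_le_add_right (d3 _ _ _) _
          _ ≤ d p (xs k) + (as k + φ p (xs k)) := by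
              apply add_le_add_right
              apply add_le_add (hbd k z hz)
              rw [d2]; exact hdz
          _ ≤ d p (xs k) + (as k + d p (xs k)) := by
              apply add_le_add_right
              exact add_le_add_right hφle _
          _ = d (xs k) p + d (xs k) p + as k := by rw [d2 p (xs k)]; abel
    have hTp : ∀ y ∈ T p, y = p := by
      intro y hy
      have h0 : d p y = 0 := by
        apply t4 _ (d1 p y)
        intro ε hε
        obtain ⟨η₁, η₂, η₃, hη₁, hη₂, hη₃, hsum⟩ := sum3 ε hε
        obtain ⟨N₁, hN₁⟩ := hp η₁ hη₁
        obtain ⟨N₂, hN₂⟩ := hp η₂ hη₂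
        obtain ⟨N₃, hN₃⟩ := hasto η₃ hη₃
        set k := max N₁ (max N₂ N₃) + 1 with hk
        have hk1 : k > N₁ := Nat.lt_succ_of_le (le_max_left _ _)
        have hk2 : k > N₂ := Nat.lt_succ_of_le (le_trans (le_max_left _ _) (le_max_right _ _))
        have hk3 : k > N₃ := Nat.lt_succ_of_le (le_trans (le_max_right _ _) (le_max_right _ _))
        exact t2 _ _ _ (key y hy k)
          (hsum _ _ _ (hN₁ k hk1) (hN₂ k hk2) (hN₃ k hk3).2)
      have : d y p = 0 := by rw [d2]; exact h0
      exact (d1' _ _).mp this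
    have hTpeq : T p = {p} := by
      ext y
      simp only [Set.mem_singleton_iff]
      constructor
      · exact hTp y
      · intro hy
        obtain ⟨w, hw⟩ := hT p
        have := hTp w hw
        rw [hy]
        exact this ▸ hw
    refine ⟨p, hTpeq, ?_⟩
    intro q hq
    by_contra hqp
    have hppos : 0 < d p q :=
      lt_of_le_of_ne (d1 _ _) (fun h => hqp (((d1' _ _).mp h.symm)).symm)
    have hpmem : p ∈ T p := by rw [hTpeq]; rfl
    obtain ⟨y', hy', hdy⟩ := hcontr p q (fun h => hqp h.symm) p hpmem
    rw [hq, Set.mem_singleton_iff] at hy'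
    rw [hy'] at hdy
    exact absurd (lt_of_le_of_lt hdy (hφ _ _ hppos)) (lt_irrefl _)
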